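/- Fixing μ and y_max with μ ≤ y_max, the Expected Improvement EI(σ) = σ·(-u·Φ(-u) + φ(u)) with u = (y_max - μ)/σ is a nondecreasing function of σ > 0. -/

import Mathlib

noncomputable def stdGaussPDF (u : ℝ) : ℝ := (Real.sqrt (2 * Real.pi))⁻¹ * Real.exp (-u ^ 2 / 2)

noncomputable def stdGaussCDF (u : ℝ) : ℝ := ∫ t in Set.Iic u, stdGaussPDF t

lemma stdGaussPDF_nonneg (u : ℝ) : 0 ≤ stdGaussPDF u := by
  unfold stdGaussPDF
  positivity

lemma stdGaussPDF_neg (u : ℝ) : stdGaussPDF (-u) = stdGaussPDF u := by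
  simp [stdGaussPDF]

lemma continuous_stdGaussPDF : Continuous stdGaussPDF := by
  unfold stdGaussPDF
  continuity

lemma integrable_stdGaussPDF : MeasureTheory.Integrable stdGaussPDF := by
  have h : MeasureTheory.Integrable (fun x : ℝ => Real.exp (-(1/2 : ℝ) * x ^ 2)) :=
    integrable_exp_neg_mul_sq (by norm_num)
  have := h.const_mul ((Real.sqrt (2 * Real.pi))⁻¹)
  refine this.congr ?_
  filter_upwards with x
  unfold stdGaussPDF
  ring_nf

lemma hasDerivAt_stdGaussPDF (u : ℝ) :
    HasDerivAt stdGaussPDF (-u * stdGaussPDF u) u := by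
  have h1 : HasDerivAt (fun x : ℝ => -x ^ 2 / 2) (-u) u := by
    have := ((hasDerivAt_pow 2 u).neg).div_const 2
    simpa using this.congr_deriv (by ring)
  have h2 := (h1.exp).const_mul ((Real.sqrt (2 * Real.pi))⁻¹)
  unfold stdGaussPDF
  exact h2.congr_deriv (by ring)

lemma hasDerivAt_stdGaussCDF (u : ℝ) :
    HasDerivAt stdGaussCDF (stdGaussPDF u) u := by
  have hint : MeasureTheory.Integrable stdGaussPDF := integrable_stdGaussPDF
  have key : ∀ x : ℝ, stdGaussCDF x = stdGaussCDF 0 + ∫ t in (0:ℝ)..x, stdGaussPDF t := by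
    intro x
    have := intervalIntegral.integral_Iic_sub_Iic (μ := MeasureTheory.volume)
      (f := stdGaussPDF) (a := (0:ℝ)) (b := x) (hint.integrableOn) (hint.integrableOn)
    unfold stdGaussCDF
    linarith [this]
  have hderiv : HasDerivAt (fun x => stdGaussCDF 0 + ∫ t in (0:ℝ)..x, stdGaussPDF t)
      (stdGaussPDF u) u := by
    have h := intervalIntegral.integral_hasDerivAt_right
      (f := stdGaussPDF) (a := (0:ℝ)) (b := u)
      (hint.intervalIntegrable)
      (continuous_stdGaussPDF.stronglyMeasurableAtFilter _ _)
      (continuous_stdGaussPDF.continuousAt)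
    exact h.const_add _
  exact hderiv.congr_deriv rfl |>.congr_of_eventuallyEq (by filter_upwards with x using key x) |>.congr_deriv rfl
  
/-- Fixing `μ ≤ y_max`, the Expected Improvement is a nondecreasing function of `σ > 0`. -/
theorem EI_monotone_in_sigma (μ ymax : ℝ) (h : μ ≤ ymax) :
    MonotoneOn (fun σ : ℝ =>
      σ * (-(((ymax - μ) / σ)) * stdGaussCDF (-((ymax - μ) / σ))
        + stdGaussPDF ((ymax - μ) / σ))) (Set.Ioi 0) := by
  set c := ymax - μ with hc
  have hc0 : 0 ≤ c := by linarith
  set F : ℝ → ℝ := fun σ =>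
    σ * (-(c / σ) * stdGaussCDF (-(c / σ)) + stdGaussPDF (c / σ)) with hF
  have key : ∀ σ : ℝ, σ ∈ Set.Ioi (0:ℝ) → HasDerivAt F (stdGaussPDF (c / σ)) σ := by
    intro σ hσ
    have hσ0 : σ ≠ 0 := ne_of_gt hσ
    have hu : HasDerivAt (fun x : ℝ => c / x) (-(c / σ ^ 2)) σ := by
      have := (hasDerivAt_inv hσ0).const_mul c
      simpa [div_eq_mul_inv, neg_div, mul_comm, mul_div_assoc] using this
    have hΦ : HasDerivAt (fun x : ℝ => stdGaussCDF (-(c / x)))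
        (stdGaussPDF (c / σ) * (c / σ ^ 2)) σ := by
      have := (hasDerivAt_stdGaussCDF (-(c / σ))).comp σ hu.neg
      simpa [stdGaussPDF_neg, Function.comp_def, Pi.neg_apply] using this
    have hφ : HasDerivAt (fun x : ℝ => stdGaussPDF (c / x))
        ((-(c / σ) * stdGaussPDF (c / σ)) * (-(c / σ ^ 2))) σ :=
      (hasDerivAt_stdGaussPDF (c / σ)).comp σ hu
    have hprod := ((hu.neg.mul hΦ).add hφ).const_mul σ |>.add
        ((hu.neg.mul hΦ).add hφ |>.const_mul 0)
    -- build derivative of product σ * G(σ)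
    have hG : HasDerivAt (fun x : ℝ => -(c / x) * stdGaussCDF (-(c / x)) + stdGaussPDF (c / x))
        ((c / σ ^ 2) * stdGaussCDF (-(c / σ)) + (-(c / σ)) * (stdGaussPDF (c / σ) * (c / σ ^ 2))
          + (-(c / σ) * stdGaussPDF (c / σ)) * (-(c / σ ^ 2))) σ := by
      have := (hu.neg.mul hΦ).add hφ
      exact this.congr_deriv (by simp only [Pi.neg_apply]; ring)
    have hid : HasDerivAt (fun x : ℝ => x) 1 σ := hasDerivAt_id σ
    have hFσ := hid.mul hG
    have : HasDerivAt F
        (1 * (-(c / σ) * stdGaussCDF (-(c / σ)) + stdGaussPDF (c / σ))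
          + σ * ((c / σ ^ 2) * stdGaussCDF (-(c / σ)) + (-(c / σ)) * (stdGaussPDF (c / σ) * (c / σ ^ 2))
          + (-(c / σ) * stdGaussPDF (c / σ)) * (-(c / σ ^ 2)))) σ := hFσ
    convert this using 1
    field_simp
    ring
  have hIoi : interior (Set.Ioi (0:ℝ)) = Set.Ioi 0 := interior_Ioi
  apply monotoneOn_of_deriv_nonneg (convex_Ioi 0)
  · intro σ hσ
    exact (key σ hσ).continuousAt.continuousWithinAt
  · rw [hIoi]
    intro σ hσ
    exact (key σ hσ).differentiableAt.differentiableWithinAt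
  · rw [hIoi]
    intro σ hσ
    rw [(key σ hσ).deriv]
    exact stdGaussPDF_nonneg _
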